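/- For every positive integer n that is not a perfect square, g(n) < f(n). -/
import Mathlib


/-- `Corr n k` says there is a square-product sequence (a nonempty finite set of
positive integers whose product is a perfect square) with least term `n` and
greatest term `k`. -/
def Corr (n k : ℕ) : Prop :=
  ∃ S : Finset ℕ, (∀ a ∈ S, 0 < a) ∧ IsSquare (∏ a ∈ S, a) ∧
    n ∈ S ∧ k ∈ S ∧ ∀ a ∈ S, n ≤ a ∧ a ≤ k

/-- Ron Graham's sequence: the least `k` such that there is a square-product
sequence with least term `n` and greatest term `k`. -/
noncomputable def g (n : ℕ) : ℕ := sInf {k | Corr n k}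

/-- `f n` is the least integer `k > n` such that `n * k` is a perfect square. -/
noncomputable def f (n : ℕ) : ℕ := sInf {k | n < k ∧ IsSquare (n * k)}

theorem g_lt_f (n : ℕ) (hn : 0 < n) (hns : ¬ IsSquare n) : g n < f n := by
  obtain ⟨s, q, hsq, hs⟩ := Nat.sq_mul_squarefree n
  have hq1 : 1 ≤ q := by
    rcases Nat.eq_zero_or_pos q with h | h
    · subst h; simp at hsq; omega
    · exact h
  have hs0 : s ≠ 0 := by rintro rfl; simp at hsq; omega
  have hs2 : 2 ≤ s := by
    rcases Nat.lt_or_ge s 2 with h | h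
    · interval_cases s
      · omega
      · exact absurd ⟨q, by rw [← hsq]; ring⟩ hns
    · exact h
  have hb : 2 * q ≤ q * s := by
    calc 2 * q = q * 2 := by ring
    _ ≤ q * s := Nat.mul_le_mul_left q hs2
  -- the maximal element of the witness set
  set K : ℕ := q ^ 2 * s + q * s + q + 1 with hK
  -- Step A : Corr n K
  have hcorr : Corr n K := by
    refine ⟨{q ^ 2 * s, q ^ 2 * s + q, q ^ 2 * s + q * s, K}, ?_, ?_, ?_, ?_, ?_⟩
    · intro a ha
      simp only [Finset.mem_insert, Finset.mem_singleton] at ha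
      rcases ha with rfl | rfl | rfl | rfl <;> nlinarith
    · have h1 : (q ^ 2 * s + q) ∉ ({q ^ 2 * s + q * s, K} : Finset ℕ) := by
        simp only [Finset.mem_insert, Finset.mem_singleton, hK]; omega
      have h2 : (q ^ 2 * s) ∉ ({q ^ 2 * s + q, q ^ 2 * s + q * s, K} : Finset ℕ) := by
        simp only [Finset.mem_insert, Finset.mem_singleton, hK]; omega
      have h3 : (q ^ 2 * s + q * s) ∉ ({K} : Finset ℕ) := by
        simp only [Finset.mem_singleton, hK]; omega
      rw [Finset.prod_insert h2, Finset.prod_insert h1, Finset.prod_insert h3,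
        Finset.prod_singleton]
      exact ⟨q ^ 2 * s * (q + 1) * (q * s + 1), by rw [hK]; ring⟩
    · simp only [Finset.mem_insert, Finset.mem_singleton]; left; omega
    · simp only [Finset.mem_insert, Finset.mem_singleton]; tauto
    · intro a ha
      simp only [Finset.mem_insert, Finset.mem_singleton] at ha
      rcases ha with rfl | rfl | rfl | rfl <;> constructor <;> omega
  -- Step B : g n ≤ K
  have hgK : g n ≤ K := Nat.sInf_le hcorr
  -- Step C : f n is in the defining set
  have hfmem : n < f n ∧ IsSquare (n * f n) := by
    have hne : {k | n < k ∧ IsSquare (n * k)}.Nonempty :=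
      ⟨4 * n, by constructor; · omega
                 · exact ⟨2 * n, by ring⟩⟩
    exact Nat.sInf_mem hne
  -- Step D : f n ≥ s * (q+1)^2
  have hfl : q ^ 2 * s + 2 * (q * s) + s ≤ f n := by
    obtain ⟨hk, r, hr⟩ := hfmem
    set k := f n with hkdef
    have hq0 : 0 < q := hq1
    -- q ∣ r
    have hqr : q ∣ r := by
      have h2 : q ^ 2 ∣ r ^ 2 := by
        refine ⟨s * k, ?_⟩
        rw [sq, ← hr, ← hsq]; ring
      exact (Nat.pow_dvd_pow_iff two_ne_zero).mp h2
    obtain ⟨t, rfl⟩ := hqr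
    have hsk : s * k = t * t := by
      have h : q ^ 2 * (s * k) = q ^ 2 * (t * t) := by
        rw [← mul_assoc, hsq, hr]; ring
      exact Nat.eq_of_mul_eq_mul_left (by positivity) h
    have hst : s ∣ t := by
      have h2 : s ∣ t ^ 2 := ⟨k, by rw [sq, ← hsk]⟩
      exact (hs.dvd_pow_iff_dvd two_ne_zero).mp h2
    obtain ⟨u, rfl⟩ := hst
    have hku : k = s * u ^ 2 := by
      have h : s * k = s * (s * u ^ 2) := by rw [hsk]; try ring
      exact Nat.eq_of_mul_eq_mul_left (by omega) h
    have hqu : q < u := by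
      by_contra h
      push_neg at h
      have hu2 : u ^ 2 ≤ q ^ 2 := Nat.pow_le_pow_left h 2
      have : k ≤ n := by
        rw [hku, ← hsq]
        calc s * u ^ 2 ≤ s * q ^ 2 := Nat.mul_le_mul_left s hu2
        _ = q ^ 2 * s := by ring
      omega
    have : q + 1 ≤ u := hqu
    calc q ^ 2 * s + 2 * (q * s) + s = s * (q + 1) ^ 2 := by ring
    _ ≤ s * u ^ 2 := by
        apply Nat.mul_le_mul_left
        exact Nat.pow_le_pow_left this 2
    _ = k := hku.symm
  -- Step E : conclude
  have : K < q ^ 2 * s + 2 * (q * s) + s := by rw [hK]; nlinarith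
  omega
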